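/- Let M be a C*-algebra and I₁, …, I_n closed two-sided ideals with M = I₁ + ⋯ + I_n. Then the positive cone of M equals the sum of the positive cones: M⁺ = I₁⁺ + ⋯ + I_n⁺. -/

import Mathlib

private lemma my_natCast_nonneg {M : Type*} [Ring M] [StarRing M] [PartialOrder M]
    [StarOrderedRing M] (n : ℕ) : (0 : M) ≤ (n : M) := by
  induction n with
  | zero => simp
  | succ k ih =>
    push_cast
    have h1 : (0 : M) ≤ 1 := by simpa using star_mul_self_nonneg (1 : M)
    exact add_nonneg ih h1

private lemma my_expand_lemma {M : Type*} [Ring M] [StarRing M] (c x : M)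
    (hc : star c = c) (hcomm : ∀ y : M, c * y = y * c) :
    star (1 - c * x) * (1 - c * x)
      = 1 - c * x - c * star x + c ^ 2 * (star x * x) := by
  have h1 : star (1 - c * x) = 1 - c * star x := by
    rw [star_sub, star_one, star_mul, hc, ← hcomm (star x)]
  have h2 : c * star x * (c * x) = c ^ 2 * (star x * x) := by
    rw [mul_assoc c (star x), ← mul_assoc (star x) c x, ← hcomm (star x),
      mul_assoc c (star x) x, ← mul_assoc c c, ← sq]
  rw [h1, sub_mul, one_mul, mul_sub, mul_one, h2]
  abel

/-- Let `M` be a C*-algebra and `I₁, …, I_n` closed two-sided ideals with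
`M = I₁ + ⋯ + I_n`.  Then the positive cone of `M` equals the sum of the
positive cones: `M⁺ = I₁⁺ + ⋯ + I_n⁺`. -/
theorem positive_cone_sum_of_ideals
    {M : Type*} [CStarAlgebra M] [PartialOrder M] [StarOrderedRing M]
    (n : ℕ) (I : Fin n → TwoSidedIdeal M)
    (hclosed : ∀ k, IsClosed (I k : Set M))
    (hstar : ∀ k, ∀ x ∈ I k, star x ∈ I k)
    (hspan : ∀ m : M, ∃ f : Fin n → M, (∀ k, f k ∈ I k) ∧ m = ∑ k, f k) :
    ∀ m : M, 0 ≤ m ↔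
      ∃ f : Fin n → M, (∀ k, f k ∈ I k ∧ 0 ≤ f k) ∧ m = ∑ k, f k := by
  intro m
  constructor
  · intro hm
    obtain ⟨e, he, h1⟩ := hspan 1
    set c : M := (n : M) with hc_def
    set s : M := ∑ k, star (e k) * e k with hs_def
    have hs_nonneg : (0 : M) ≤ s :=
      Finset.sum_nonneg fun k _ => star_mul_self_nonneg _
    have h1star : (1 : M) = ∑ k, star (e k) := by
      simpa using congrArg star h1
    -- the key inequality : c ≤ c ^ 2 * s
    have hexpand : ∀ k, star (1 - c * e k) * (1 - c * e k)
        = 1 - c * e k - c * star (e k) + c ^ 2 * (star (e k) * e k) := by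
      intro k
      exact my_expand_lemma c (e k) (by simp [hc_def])
        (fun y => (Nat.cast_commute n y).eq)
    have hsum_eq : ∑ k, star (1 - c * e k) * (1 - c * e k) = c ^ 2 * s - c := by
      simp only [hexpand]
      rw [Finset.sum_add_distrib, Finset.sum_sub_distrib, Finset.sum_sub_distrib,
        ← Finset.mul_sum, ← Finset.mul_sum, ← Finset.mul_sum]
      rw [← h1, ← h1star]
      simp only [mul_one]
      rw [Finset.sum_const, Finset.card_univ, Fintype.card_fin, nsmul_eq_mul, mul_one]
      abel
    have hkey : c ≤ c ^ 2 * s := by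
      have h0 : (0 : M) ≤ ∑ k, star (1 - c * e k) * (1 - c * e k) :=
        Finset.sum_nonneg fun k _ => star_mul_self_nonneg _
      rw [hsum_eq] at h0
      exact sub_nonneg.mp h0
    have hc_nonneg : (0 : M) ≤ c := my_natCast_nonneg n
    have hc_unit : IsUnit c := by
      rcases Nat.eq_zero_or_pos n with h | h
      · subst h
        have h10 : (1 : M) = 0 := by simpa using h1
        rw [hc_def]
        push_cast
        exact isUnit_zero_iff.mpr h10.symm
      · have hn : ((n : ℝ)) ≠ 0 := Nat.cast_ne_zero.mpr h.ne'
        have := (isUnit_iff_ne_zero.mpr hn).map (algebraMap ℝ M)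
        simpa using this
    have hs_unit : IsUnit s := by
      have hu2 : IsUnit (c ^ 2 * s) :=
        CStarAlgebra.isUnit_of_le c hkey (hc_unit.isStrictlyPositive hc_nonneg)
      have hc2 : IsUnit (c ^ 2) := hc_unit.pow 2
      obtain ⟨u, hu⟩ := hc2
      have : s = ↑u⁻¹ * (c ^ 2 * s) := by
        rw [← hu, ← mul_assoc, Units.inv_mul, one_mul]
      rw [this]
      exact (u⁻¹).isUnit.mul hu2
    -- b = s ^ (-1/2)
    set b : M := s ^ (-(1 / 2) : ℝ) with hb_def
    have hb_nonneg : (0 : M) ≤ b := CFC.rpow_nonneg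
    have hbsb : b * s * b = 1 := CFC.conjugate_rpow_neg_one_half s (hs_unit.isStrictlyPositive hs_nonneg)
    -- r = sqrt m
    set r : M := CFC.sqrt m with hr_def
    have hr_nonneg : (0 : M) ≤ r := CFC.sqrt_nonneg m
    have hrr : r * r = m := CFC.sqrt_mul_sqrt_self m hm
    set w : M := b * r with hw_def
    have hw_star : star w = r * b := by
      rw [hw_def, star_mul, (IsSelfAdjoint.of_nonneg hr_nonneg).star_eq,
        (IsSelfAdjoint.of_nonneg hb_nonneg).star_eq]
    refine ⟨fun k => star (e k * w) * (e k * w), fun k => ⟨?_, star_mul_self_nonneg _⟩, ?_⟩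
    · exact (I k).mul_mem_left _ _ ((I k).mul_mem_right _ _ (he k))
    · have step1 : ∑ k, star (e k * w) * (e k * w) = star w * s * w := by
        have : ∀ k, star (e k * w) * (e k * w) = star w * (star (e k) * e k * w) := by
          intro k
          rw [star_mul]
          noncomm_ring
        simp only [this]
        have h3 : s * w = ∑ k, star (e k) * e k * w := by
          rw [hs_def, Finset.sum_mul]
        conv_rhs => rw [mul_assoc, h3, Finset.mul_sum]
      rw [step1, hw_star, hw_def]
      have : r * b * s * (b * r) = r * (b * s * b) * r := by noncomm_ring
      rw [this, hbsb, mul_one, hrr]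
  · rintro ⟨f, hf, rfl⟩
    exact Finset.sum_nonneg fun k _ => (hf k).2
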